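/- Let H be a nonempty convex subset of X with inf_{ξ∈H} sup_{ω∈Ω} ξ(ω) > −∞, let ν^H(Ψ) = inf{ m ∈ ℝ : ∃ ξ ∈ H with m + Ψ ≥ ξ pointwise }, and let q : X → ℝ be a linear functional that is positive (Ψ ≥ 0 pointwise implies q(Ψ) ≥ 0) and normalized (q(1) = 1). Then the minimal penalty of ν^H at q equals the support function of H: sup_{Ψ∈X} ( q(−Ψ) − ν^H(Ψ) ) = sup_{ξ∈H} q(−ξ), as an equality in ℝ ∪ {+∞}. -/

import Mathlib

open BoundedContinuousFunction

/-- The risk measure generated by a convex set `H`: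
`ν^H(Ψ) = inf { m : ∃ ξ ∈ H, m + Ψ ≥ ξ pointwise }`. -/
noncomputable def nuH {Ω : Type*} [TopologicalSpace Ω]
    (H : Set (Ω →ᵇ ℝ)) (Ψ : Ω →ᵇ ℝ) : ℝ :=
  sInf {m : ℝ | ∃ ξ ∈ H, ∀ ω, ξ ω ≤ m + Ψ ω}

/-- For a positive normalized linear functional `q`, the minimal penalty of `ν^H`
at `q` equals the support function of `H`:
`sup_Ψ (q(-Ψ) - ν^H(Ψ)) = sup_{ξ ∈ H} q(-ξ)` in `ℝ ∪ {+∞}` (inside `EReal`). -/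
theorem stmt11 {Ω : Type*} [TopologicalSpace Ω] [DiscreteTopology Ω] [Nonempty Ω]
    (H : Set (Ω →ᵇ ℝ)) (hne : H.Nonempty) (hconv : Convex ℝ H)
    (b : ℝ) (hb : ∀ ξ ∈ H, b ≤ ⨆ ω, ξ ω)
    (q : (Ω →ᵇ ℝ) →ₗ[ℝ] ℝ)
    (hpos : ∀ Ψ : Ω →ᵇ ℝ, (∀ ω, 0 ≤ Ψ ω) → 0 ≤ q Ψ)
    (hnorm : q (BoundedContinuousFunction.const Ω (1 : ℝ)) = 1) :
    (⨆ Ψ : Ω →ᵇ ℝ, ((q (-Ψ) - nuH H Ψ : ℝ) : EReal))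
      = ⨆ ξ : H, ((q (-(ξ : Ω →ᵇ ℝ)) : ℝ) : EReal) := by

  classical
  obtain ⟨ξ₀, hξ₀⟩ := hne
  -- q of a constant
  have hqconst : ∀ m : ℝ, q (const Ω m) = m := by
    intro m
    have h1 : const Ω m = m • const Ω (1 : ℝ) := by
      ext ω; simp
    rw [h1, map_smul, hnorm, smul_eq_mul, mul_one]
  -- the defining set of nuH is nonempty and bounded below
  have hSne : ∀ Ψ : Ω →ᵇ ℝ, ({m : ℝ | ∃ ξ ∈ H, ∀ ω, ξ ω ≤ m + Ψ ω}).Nonempty := by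
    intro Ψ
    refine ⟨‖ξ₀‖ + ‖Ψ‖, ξ₀, hξ₀, fun ω => ?_⟩
    have h1 := abs_le.1 (ξ₀.norm_coe_le_norm ω)
    have h2 := abs_le.1 (Ψ.norm_coe_le_norm ω)
    linarith [h1.2, h2.1]
  have hSbdd : ∀ Ψ : Ω →ᵇ ℝ, BddBelow {m : ℝ | ∃ ξ ∈ H, ∀ ω, ξ ω ≤ m + Ψ ω} := by
    intro Ψ
    refine ⟨b - ‖Ψ‖, ?_⟩
    rintro m ⟨ξ, hξ, hle⟩
    have h1 : (⨆ ω, ξ ω) ≤ m + ‖Ψ‖ := by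
      refine ciSup_le fun ω => ?_
      have h2 := abs_le.1 (Ψ.norm_coe_le_norm ω)
      linarith [hle ω, h2.2]
    have := hb ξ hξ
    linarith
  -- key inequality: if m is admissible for Ψ with witness ξ, then q(-Ψ) - m ≤ q(-ξ)
  have hkey : ∀ (Ψ ξ : Ω →ᵇ ℝ) (m : ℝ), ξ ∈ H → (∀ ω, ξ ω ≤ m + Ψ ω) →
      q (-Ψ) - m ≤ q (-ξ) := by
    intro Ψ ξ m hξ hle
    have h0 : 0 ≤ q (const Ω m + Ψ - ξ) := by
      refine hpos _ fun ω => ?_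
      have := hle ω
      simp only [BoundedContinuousFunction.coe_sub, BoundedContinuousFunction.coe_add,
        Pi.sub_apply, Pi.add_apply, BoundedContinuousFunction.const_apply]
      linarith
    have h1 : q (const Ω m + Ψ - ξ) = m + q Ψ - q ξ := by
      rw [map_sub, map_add, hqconst]
    rw [h1] at h0
    have h2 : q (-Ψ) = -q Ψ := map_neg q Ψ
    have h3 : q (-ξ) = -q ξ := map_neg q ξ
    linarith
  apply le_antisymm
  · refine iSup_le fun Ψ => ?_
    refine le_of_forall_lt fun c hc => ?_
    induction c with
    | bot =>
      refine lt_of_lt_of_le (EReal.bot_lt_coe (q (-(ξ₀ : Ω →ᵇ ℝ)))) ?_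
      exact le_iSup (fun ξ : H => ((q (-(ξ : Ω →ᵇ ℝ)) : ℝ) : EReal)) ⟨ξ₀, hξ₀⟩
    | coe r =>
      have hr : r < q (-Ψ) - nuH H Ψ := by exact_mod_cast hc
      have hlt : nuH H Ψ < q (-Ψ) - r := by linarith
      have hlt' : sInf {m : ℝ | ∃ ξ ∈ H, ∀ ω, ξ ω ≤ m + Ψ ω} < q (-Ψ) - r := hlt
      obtain ⟨m, hmS, hm⟩ := (csInf_lt_iff (hSbdd Ψ) (hSne Ψ)).1 hlt'
      obtain ⟨ξ, hξ, hle⟩ := hmS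
      have h4 : r < q (-ξ) := by
        have := hkey Ψ ξ m hξ hle
        linarith
      calc ((r : ℝ) : EReal) < ((q (-ξ) : ℝ) : EReal) := by exact_mod_cast h4
        _ ≤ _ := le_iSup (fun ξ : H => ((q (-(ξ : Ω →ᵇ ℝ)) : ℝ) : EReal)) ⟨ξ, hξ⟩
    | top => exact absurd hc (by simp)
  · refine iSup_le fun ξ => ?_
    have h0 : nuH H (ξ : Ω →ᵇ ℝ) ≤ 0 := by
      refine csInf_le (hSbdd _) ?_
      exact ⟨(ξ : Ω →ᵇ ℝ), ξ.2, fun ω => by simp⟩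
    have h1 : q (-(ξ : Ω →ᵇ ℝ)) ≤ q (-(ξ : Ω →ᵇ ℝ)) - nuH H (ξ : Ω →ᵇ ℝ) := by linarith
    calc ((q (-(ξ : Ω →ᵇ ℝ)) : ℝ) : EReal)
        ≤ ((q (-(ξ : Ω →ᵇ ℝ)) - nuH H (ξ : Ω →ᵇ ℝ) : ℝ) : EReal) := by exact_mod_cast h1
      _ ≤ _ := le_iSup (fun Ψ : Ω →ᵇ ℝ => ((q (-Ψ) - nuH H Ψ : ℝ) : EReal)) (ξ : Ω →ᵇ ℝ)
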